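/- Let M be a set carrying a fixed linear order, and suppose two commutative semiring structures (with operations +₁, *₁ and +₂, *₂) are given on M, each of which makes M (with the given order) a linearly ordered commutative semiring in which 0 is the least element, discretely ordered, with subtraction and with division with remainder. If a and b are nonstandard (with respect to either structure; the standard elements agree since they are the elements with only finitely many predecessors), then there is an order automorphism f : M ≃o M with f (a *₁ b) = a *₂ b. -/

import Mathlib

/-- The bundled class `LinearOrderedCommSemiring` of the older Mathlib (since removed):
a commutative semiring with a linear order making it a strict ordered semiring. -/
class LinearOrderedCommSemiring (M : Type*) extends CommSemiring M, LinearOrder M,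
    IsStrictOrderedRing M

/-- `a` is a nonstandard element: above every natural number cast. -/
def Nonstd {M : Type*} [LinearOrderedCommSemiring M] (a : M) : Prop :=
  ∀ n : ℕ, (n : M) < a

def E0 {M : Type*} [LinearOrderedCommSemiring M] (a b : M) : Prop :=
  ∃ n : ℕ, a < b + (n : M) ∧ b < a + (n : M)

def E1 {M : Type*} [LinearOrderedCommSemiring M] (a b : M) : Prop :=
  ∃ c : M, (∀ n : ℕ, (n : M) * c < a ∧ (n : M) * c < b) ∧ a < b + c ∧ b < a + c

def E2 {M : Type*} [LinearOrderedCommSemiring M] (a b : M) : Prop :=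
  ∃ n : ℕ, a < (n : M) * b ∧ b < (n : M) * a

def E3 {M : Type*} [LinearOrderedCommSemiring M] (a b : M) : Prop :=
  ∃ c : M, (∀ n : ℕ, c ^ n < a ∧ c ^ n < b) ∧ a < b * c ∧ b < a * c

def E4 {M : Type*} [LinearOrderedCommSemiring M] (a b : M) : Prop :=
  ∃ n : ℕ, a < b ^ n ∧ b < a ^ n

/-- `a E⁵ b`: some order automorphism of `M` maps `a` to `b`. -/
def E5 {M : Type*} [LinearOrderedCommSemiring M] (a b : M) : Prop :=
  ∃ f : M ≃o M, f a = b

/-- `E` is a convex equivalence relation on the nonstandard elements of `M`. -/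
def IsConvexEquiv {M : Type*} [LinearOrderedCommSemiring M] (E : M → M → Prop) : Prop :=
  (∀ a : M, Nonstd a → E a a) ∧
  (∀ a b : M, Nonstd a → Nonstd b → E a b → E b a) ∧
  (∀ a b c : M, Nonstd a → Nonstd b → Nonstd c → E a b → E b c → E a c) ∧
  (∀ a b c : M, Nonstd a → Nonstd b → Nonstd c → a ≤ b → b ≤ c → E a c → E a b)

/-- An almost `{<,+}`-isomorphism: an order isomorphism whose additivity error is finite. -/
def IsAlmostAddIso {M₁ M₂ : Type*} [LinearOrderedCommSemiring M₁]
    [LinearOrderedCommSemiring M₂] (f : M₁ ≃o M₂) : Prop :=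
  ∀ a b : M₁, ∃ n : ℕ, f (a + b) < f a + f b + (n : M₂) ∧ f a + f b < f (a + b) + (n : M₂)

/-- `M` is 2-order-rigid. -/
def OrderRigid2 (M : Type*) [LinearOrderedCommSemiring M] : Prop :=
  ∀ a b : M, Nonstd a → Nonstd b →
    Nonempty ({x : M // x < a} ≃o {x : M // x < b}) → E2 a b

/-- `M` is 3-order-rigid. -/
def OrderRigid3 (M : Type*) [LinearOrderedCommSemiring M] : Prop :=
  ∀ a b : M, Nonstd a → Nonstd b →
    Nonempty ({x : M // x < a} ≃o {x : M // x < b}) → E3 a b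

/-- `M` is 4-order-rigid. -/
def OrderRigid4 (M : Type*) [LinearOrderedCommSemiring M] : Prop :=
  ∀ a b : M, Nonstd a → Nonstd b →
    Nonempty ({x : M // x < a} ≃o {x : M // x < b}) → E4 a b


section Aux
variable {M : Type*}

private lemma aux_succ_le [LinearOrderedCommSemiring M]
    (hd : ∀ a x : M, ¬(a < x ∧ x < a + 1)) {q a : M} (h : q < a) : q + 1 ≤ a := by
  by_contra hc
  exact hd q a ⟨h, lt_of_not_ge hc⟩

private lemma aux_key [LinearOrderedCommSemiring M]
    (hd : ∀ a x : M, ¬(a < x ∧ x < a + 1)) (h0 : ∀ x : M, 0 ≤ x)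
    {b q q' r : M} (hr : r < b) (hq : q < q') (r' : M) :
    b * q + r < b * q' + r' := by
  have h1 : b * q + r < b * (q + 1) := by
    rw [mul_add, mul_one]; exact add_lt_add_right hr _
  have h2 : b * (q + 1) ≤ b * q' := mul_le_mul_of_nonneg_left (aux_succ_le hd hq) (h0 b)
  calc b * q + r < b * (q + 1) := h1
    _ ≤ b * q' := h2
    _ ≤ b * q' + r' := le_add_of_nonneg_right (h0 r')

private lemma aux_A1 [LinearOrderedCommSemiring M] (lt : M → M → Prop)
    (hlt : ∀ x y : M, lt x y ↔ x < y)
    (hd : ∀ a x : M, ¬(a < x ∧ x < a + 1)) (h0 : ∀ x : M, 0 ≤ x) (b : M) :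
    ∀ q r q' r' : M, lt r b → lt r' b →
      (lt (b * q + r) (b * q' + r') ↔ (lt q q' ∨ (q = q' ∧ lt r r'))) := by
  simp only [hlt]
  intro q r q' r' hr hr'
  constructor
  · intro h
    rcases lt_trichotomy q q' with h1 | h1 | h1
    · exact Or.inl h1
    · exact Or.inr ⟨h1, by subst h1; exact lt_of_add_lt_add_left h⟩
    · exact absurd (aux_key hd h0 hr' h1 r) (lt_asymm h)
  · rintro (h1 | ⟨rfl, h1⟩)
    · exact aux_key hd h0 hr h1 r'
    · exact add_lt_add_right h1 _

private lemma aux_A2 [LinearOrderedCommSemiring M] (lt : M → M → Prop)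
    (hlt : ∀ x y : M, lt x y ↔ x < y)
    (hd : ∀ a x : M, ¬(a < x ∧ x < a + 1)) (h0 : ∀ x : M, 0 ≤ x) (a b : M) :
    ∀ q r : M, lt q a → lt r b → lt (b * q + r) (a * b) := by
  simp only [hlt]
  intro q r hq hr
  have h1 : b * q + r < b * (q + 1) := by
    rw [mul_add, mul_one]; exact add_lt_add_right hr _
  have h2 : b * (q + 1) ≤ b * a := mul_le_mul_of_nonneg_left (aux_succ_le hd hq) (h0 b)
  rw [mul_comm a b]
  exact lt_of_lt_of_le h1 h2

private lemma aux_A3 [LinearOrderedCommSemiring M] (lt : M → M → Prop)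
    (hlt : ∀ x y : M, lt x y ↔ x < y)
    (hdiv : ∀ a b : M, b ≠ 0 → ∃ q r : M, a = b * q + r ∧ r < b)
    (h0 : ∀ x : M, 0 ≤ x) (a b : M) (hb : lt 0 b) :
    ∀ x : M, lt x (a * b) → ∃ q r : M, lt q a ∧ lt r b ∧ x = b * q + r := by
  simp only [hlt] at *
  intro x hx
  obtain ⟨q, r, hx', hr⟩ := hdiv x b hb.ne'
  refine ⟨q, r, ?_, hr, hx'⟩
  by_contra hc
  have hle : a * b ≤ x := by
    rw [hx', mul_comm a b]
    calc b * a ≤ b * q := mul_le_mul_of_nonneg_left (le_of_not_gt hc) (h0 b)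
      _ ≤ b * q + r := le_add_of_nonneg_right (h0 r)
  exact absurd hx (not_lt_of_ge hle)

private noncomputable def aux_tail [LinearOrderedCommSemiring M]
    (h0 : ∀ x : M, 0 ≤ x) (hsub : ∀ a b : M, a ≤ b → ∃ c, b = a + c) (c : M) :
    M ≃o {x : M // c ≤ x} :=
  StrictMono.orderIsoOfSurjective
    (fun x => ⟨c + x, le_add_of_nonneg_right (h0 x)⟩)
    (fun x y h => Subtype.mk_lt_mk.mpr (add_lt_add_right h c))
    (fun y => by
      obtain ⟨d, hd⟩ := hsub c y.1 y.2
      exact ⟨d, Subtype.ext hd.symm⟩)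

private lemma aux_tail_zero [LinearOrderedCommSemiring M]
    (h0 : ∀ x : M, 0 ≤ x) (hsub : ∀ a b : M, a ≤ b → ∃ c, b = a + c) (c : M) :
    aux_tail h0 hsub c 0 = ⟨c, le_rfl⟩ := by
  show (⟨c + 0, _⟩ : {x : M // c ≤ x}) = ⟨c, le_rfl⟩
  exact Subtype.ext (add_zero c)

private noncomputable def aux_glue [LinearOrder M] (u v : M)
    (g : {x : M // x < u} ≃o {x : M // x < v})
    (t : {x : M // u ≤ x} ≃o {x : M // v ≤ x}) : M ≃o M :=
  StrictMono.orderIsoOfSurjective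
    (fun x => if h : x < u then (g ⟨x, h⟩ : M) else (t ⟨x, le_of_not_gt h⟩ : M))
    (by
      intro x y hxy
      dsimp only
      by_cases hx : x < u <;> by_cases hy : y < u
      · rw [dif_pos hx, dif_pos hy]
        exact Subtype.coe_lt_coe.mpr (g.strictMono (Subtype.mk_lt_mk.mpr hxy))
      · rw [dif_pos hx, dif_neg hy]
        exact lt_of_lt_of_le (g ⟨x, hx⟩).2 (t ⟨y, le_of_not_gt hy⟩).2
      · exact absurd (lt_of_lt_of_le hy (le_of_not_gt hx)) (not_lt_of_gt hxy)
      · rw [dif_neg hx, dif_neg hy]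
        exact Subtype.coe_lt_coe.mpr (t.strictMono (Subtype.mk_lt_mk.mpr hxy)))
    (by
      intro y
      by_cases hy : y < v
      · refine ⟨(g.symm ⟨y, hy⟩ : M), ?_⟩
        dsimp only
        rw [dif_pos (g.symm ⟨y, hy⟩).2]
        rw [show (⟨(g.symm ⟨y, hy⟩ : M), (g.symm ⟨y, hy⟩).2⟩ : {x : M // x < u})
            = g.symm ⟨y, hy⟩ from Subtype.ext rfl]
        rw [g.apply_symm_apply]
      · refine ⟨(t.symm ⟨y, le_of_not_gt hy⟩ : M), ?_⟩
        dsimp only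
        have h1 : ¬ ((t.symm ⟨y, le_of_not_gt hy⟩ : M) < u) :=
          not_lt_of_ge (t.symm ⟨y, le_of_not_gt hy⟩).2
        rw [dif_neg h1]
        rw [show (⟨(t.symm ⟨y, le_of_not_gt hy⟩ : M), le_of_not_gt h1⟩ : {x : M // u ≤ x})
            = t.symm ⟨y, le_of_not_gt hy⟩ from Subtype.ext rfl]
        rw [t.apply_symm_apply])

private lemma aux_glue_apply_of_le [LinearOrder M] (u v : M)
    (g : {x : M // x < u} ≃o {x : M // x < v})
    (t : {x : M // u ≤ x} ≃o {x : M // v ≤ x}) {x : M} (hx : u ≤ x) :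
    aux_glue u v g t x = ↑(t ⟨x, hx⟩) := by
  show (if h : x < u then (g ⟨x, h⟩ : M) else (t ⟨x, le_of_not_gt h⟩ : M)) = _
  rw [dif_neg (not_lt_of_ge hx)]

private lemma aux_build [LinearOrderedCommSemiring M] (a b : M) (F : M → M → M) (w : M)
    (h1 : ∀ q r q' r' : M, r < b → r' < b → (F q r < F q' r' ↔ (q < q' ∨ (q = q' ∧ r < r'))))
    (h2 : ∀ q r : M, q < a → r < b → F q r < w)
    (h3 : ∀ x : M, x < w → ∃ q r : M, q < a ∧ r < b ∧ x = F q r) :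
    Nonempty (({x : M // x < a} ×ₗ {x : M // x < b}) ≃o {x : M // x < w}) := by
  refine ⟨StrictMono.orderIsoOfSurjective
    (fun p => ⟨F ((ofLex p).1 : M) ((ofLex p).2 : M), h2 _ _ (ofLex p).1.2 (ofLex p).2.2⟩)
    ?_ ?_⟩
  · intro p q h
    have h' := Prod.Lex.lt_iff.mp h
    refine Subtype.mk_lt_mk.mpr ((h1 _ _ _ _ (ofLex p).2.2 (ofLex q).2.2).mpr ?_)
    rcases h' with h' | ⟨heq, h'⟩
    · exact Or.inl (Subtype.coe_lt_coe.mpr h')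
    · exact Or.inr ⟨congrArg Subtype.val heq, Subtype.coe_lt_coe.mpr h'⟩
  · rintro ⟨y, hy⟩
    obtain ⟨q, r, hq, hr, rfl⟩ := h3 y hy
    exact ⟨toLex (⟨q, hq⟩, ⟨r, hr⟩), rfl⟩

end Aux

/-- two semiring structures on the same linearly ordered set: the two
products of nonstandard `a, b` are conjugate by an order automorphism. -/
theorem two_structures_mul_E5 {M : Type*}
    (S₁ S₂ : LinearOrderedCommSemiring M)
    (hord : (letI := S₁; (inferInstance : LinearOrder M))
          = (letI := S₂; (inferInstance : LinearOrder M)))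
    (h0₁ : letI := S₁; ∀ x : M, 0 ≤ x)
    (h0₂ : letI := S₂; ∀ x : M, 0 ≤ x)
    (hd₁ : letI := S₁; ∀ a x : M, ¬(a < x ∧ x < a + 1))
    (hd₂ : letI := S₂; ∀ a x : M, ¬(a < x ∧ x < a + 1))
    (hsub₁ : letI := S₁; ∀ a b : M, a ≤ b → ∃ c, b = a + c)
    (hsub₂ : letI := S₂; ∀ a b : M, a ≤ b → ∃ c, b = a + c)
    (hdiv₁ : letI := S₁; ∀ a b : M, b ≠ 0 → ∃ q r : M, a = b * q + r ∧ r < b)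
    (hdiv₂ : letI := S₂; ∀ a b : M, b ≠ 0 → ∃ q r : M, a = b * q + r ∧ r < b)
    (a b : M)
    (ha₁ : letI := S₁; ∀ n : ℕ, (n : M) < a)
    (ha₂ : letI := S₂; ∀ n : ℕ, (n : M) < a)
    (hb₁ : letI := S₁; ∀ n : ℕ, (n : M) < b)
    (hb₂ : letI := S₂; ∀ n : ℕ, (n : M) < b) :
    letI := S₁
    ∃ f : M ≃o M, f (a * b) = (letI := S₂; a * b) := by
  letI := S₁
  show ∃ f : M ≃o M, f (a * b) = (letI := S₂; a * b)
  have hlt2 : ∀ x y : M, x < y ↔ (letI := S₂; x < y) := fun x y =>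
    iff_of_eq (congrArg (fun L : LinearOrder M =>
      @LT.lt M (@Preorder.toLT M (@PartialOrder.toPreorder M
        (@LinearOrder.toPartialOrder M L))) x y) hord)
  have hle2 : ∀ x y : M, x ≤ y ↔ (letI := S₂; x ≤ y) := fun x y =>
    iff_of_eq (congrArg (fun L : LinearOrder M =>
      @LE.le M (@Preorder.toLE M (@PartialOrder.toPreorder M
        (@LinearOrder.toPartialOrder M L))) x y) hord)
  have hb0 : (0 : M) < b := by have := hb₁ 0; rwa [Nat.cast_zero] at this
  have hzz : (letI := S₂; (0 : M)) = 0 :=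
    le_antisymm ((hle2 _ _).mpr (h0₂ 0)) (h0₁ _)
  have hb0₂' : (letI := S₂; (0 : M)) < b := by rw [hzz]; exact hb0
  obtain ⟨e₁⟩ := aux_build a b (fun q r => b * q + r) (a * b)
    (aux_A1 (fun x y : M => x < y) (fun _ _ => Iff.rfl) hd₁ h0₁ b)
    (aux_A2 (fun x y : M => x < y) (fun _ _ => Iff.rfl) hd₁ h0₁ a b)
    (aux_A3 (fun x y : M => x < y) (fun _ _ => Iff.rfl) hdiv₁ h0₁ a b hb0)
  obtain ⟨e₂⟩ := aux_build a b (fun q r => (letI := S₂; b * q + r)) (letI := S₂; a * b)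
    (@aux_A1 M S₂ (fun x y : M => x < y) hlt2 hd₂ h0₂ b)
    (@aux_A2 M S₂ (fun x y : M => x < y) hlt2 hd₂ h0₂ a b)
    (@aux_A3 M S₂ (fun x y : M => x < y) hlt2 hdiv₂ h0₂ a b hb0₂')
  set v : M := (letI := S₂; a * b) with hv
  have g : {x : M // x < a * b} ≃o {x : M // x < v} := e₁.symm.trans e₂
  have ht : ((aux_tail h0₁ hsub₁ (a * b)).symm.trans (aux_tail h0₁ hsub₁ v))
      ⟨a * b, le_rfl⟩ = ⟨v, le_rfl⟩ := by
    have h1 : (aux_tail h0₁ hsub₁ (a * b)).symm ⟨a * b, le_rfl⟩ = 0 := by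
      rw [OrderIso.symm_apply_eq, aux_tail_zero]
    rw [OrderIso.trans_apply, h1, aux_tail_zero]
  refine ⟨aux_glue (a * b) v g
    ((aux_tail h0₁ hsub₁ (a * b)).symm.trans (aux_tail h0₁ hsub₁ v)), ?_⟩
  rw [aux_glue_apply_of_le _ _ _ _ le_rfl, ht]
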